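/- Let Ω = (0,1)^d with d > 1, let w, f be bounded measurable functions on Ω with w(x) ≥ c₁ > 0 a.e., let g be a bounded measurable function on ∂Ω, let L be the Ritz energy functional, and let u* be a bounded C¹ weak solution (as in the weak formulation) with bounded gradient. Let N be a nonempty class of bounded C¹ functions with bounded gradients, let L̂ : N → ℝ be any functional with S := sup_{u∈N}|L(u) − L̂(u)| < ∞, let û ∈ N satisfy L̂(û) ≤ L̂(u) for all u ∈ N, and let u_A ∈ N. Then ‖u_A − u*‖²_{H¹(Ω)} ≤ (2/min(c₁,1))·[ (max(‖w‖_{L^∞(Ω)},1)/2)·inf_{ū∈N} ‖ū − u*‖²_{H¹(Ω)} + 2S + (L̂(u_A) − L̂(û)) ]. -/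

import Mathlib

open MeasureTheory
open scoped ENNReal NNReal

noncomputable section

/-- The open unit cube `Ω = (0,1)^d` in `ℝ^d`. -/
def openCube (d : ℕ) : Set (EuclideanSpace ℝ (Fin d)) := {x | ∀ i, x i ∈ Set.Ioo (0:ℝ) 1}

/-- The closed unit cube `[0,1]^d` in `ℝ^d`. -/
def closedCube (d : ℕ) : Set (EuclideanSpace ℝ (Fin d)) := {x | ∀ i, x i ∈ Set.Icc (0:ℝ) 1}

/-- `u` is a bounded `C¹` function with bounded gradient on a neighborhood of the closed cube. -/
def IsNice (d : ℕ) (u : EuclideanSpace ℝ (Fin d) → ℝ) : Prop :=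
  ∃ U : Set (EuclideanSpace ℝ (Fin d)), IsOpen U ∧ closedCube d ⊆ U ∧ ContDiffOn ℝ 1 u U ∧
    (∃ C, ∀ x ∈ U, |u x| ≤ C) ∧ (∃ C, ∀ x ∈ U, ‖gradient u x‖ ≤ C)

/-- The Ritz energy functional
`L(u) = ½∫_Ω ‖∇u‖² + ½∫_Ω w u² − ∫_Ω f u − ∫_{∂Ω} g u dH^{d-1}`. -/
def ritzEnergy (d : ℕ) (w f g : EuclideanSpace ℝ (Fin d) → ℝ)
    (u : EuclideanSpace ℝ (Fin d) → ℝ) : ℝ :=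
  (1/2) * (∫ x in openCube d, ‖gradient u x‖^2) +
    (1/2) * (∫ x in openCube d, w x * (u x)^2) -
    (∫ x in openCube d, f x * u x) -
    ∫ y in frontier (openCube d), g y * u y ∂(μH[(d:ℝ) - 1])

/-- `ustar` satisfies the weak formulation of the Neumann problem
`−Δu + wu = f` in `Ω`, `∂u/∂n = g` on `∂Ω`, tested against all bounded `C¹`
functions with bounded gradient. -/
def IsWeakSol (d : ℕ) (w f g ustar : EuclideanSpace ℝ (Fin d) → ℝ) : Prop :=
  ∀ v : EuclideanSpace ℝ (Fin d) → ℝ, IsNice d v →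
    (∫ x in openCube d, (inner ℝ (gradient ustar x) (gradient v x) : ℝ)) +
      (∫ x in openCube d, w x * ustar x * v x) =
    (∫ x in openCube d, f x * v x) +
      ∫ y in frontier (openCube d), g y * v y ∂(μH[(d:ℝ) - 1])

/-- The squared `H¹(Ω)` norm `∫_Ω u² + ∫_Ω ‖∇u‖²`. -/
def H1normSq (d : ℕ) (u : EuclideanSpace ℝ (Fin d) → ℝ) : ℝ :=
  (∫ x in openCube d, (u x)^2) + ∫ x in openCube d, ‖gradient u x‖^2

lemma isOpen_openCube (d : ℕ) : IsOpen (openCube d) := by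
  have : openCube d = ⋂ i, (fun x : EuclideanSpace ℝ (Fin d) => x i) ⁻¹' Set.Ioo (0:ℝ) 1 := by
    ext x; simp [openCube]
  rw [this]
  exact isOpen_iInter_of_finite fun i =>
    (isOpen_Ioo).preimage (EuclideanSpace.proj i).continuous

lemma isCompact_closedCube (d : ℕ) : IsCompact (closedCube d) := by
  have h : closedCube d =
      (EuclideanSpace.equiv (Fin d) ℝ).toHomeomorph.symm '' (Set.univ.pi fun _ => Set.Icc (0:ℝ) 1) := by
    ext x
    constructor
    · intro hx
      exact ⟨(EuclideanSpace.equiv (Fin d) ℝ).toHomeomorph x, fun i _ => hx i, by simp⟩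
    · rintro ⟨y, hy, rfl⟩
      intro i
      simpa using hy i (Set.mem_univ i)
  rw [h]
  exact (isCompact_univ_pi fun _ => isCompact_Icc).image (Homeomorph.continuous _)

lemma openCube_subset_closedCube (d : ℕ) : openCube d ⊆ closedCube d :=
  fun x hx i => Set.Ioo_subset_Icc_self (hx i)

lemma isClosed_closedCube (d : ℕ) : IsClosed (closedCube d) := (isCompact_closedCube d).isClosed

lemma frontier_subset (d : ℕ) : frontier (openCube d) ⊆ closedCube d \ openCube d := by
  intro x hx
  rw [frontier, (isOpen_openCube d).interior_eq] at hx
  exact ⟨(isClosed_closedCube d).closure_subset_iff.2 (openCube_subset_closedCube d) hx.1, hx.2⟩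

lemma volume_openCube_lt_top (d : ℕ) : volume (openCube d) < ⊤ :=
  lt_of_le_of_lt (measure_mono (openCube_subset_closedCube d))
    (isCompact_closedCube d).measure_lt_top

/-- The face `{x ∈ [0,1]^{m+1} | x i = b}`. -/
def face (m : ℕ) (i : Fin (m+1)) (b : ℝ) : Set (EuclideanSpace ℝ (Fin (m+1))) :=
  {x ∈ closedCube (m+1) | x i = b}

/-- Inserting a fixed coordinate, as a map of Euclidean spaces. -/
def insertMap (m : ℕ) (i : Fin (m+1)) (b : ℝ) :
    EuclideanSpace ℝ (Fin m) → EuclideanSpace ℝ (Fin (m+1)) :=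
  fun y => WithLp.toLp 2 (Fin.insertNth i b y.ofLp)

lemma insertMap_isometry (m : ℕ) (i : Fin (m+1)) (b : ℝ) :
    Isometry (insertMap m i b) := by
  apply Isometry.of_dist_eq
  intro y z
  have h1 := EuclideanSpace.dist_eq (𝕜 := ℝ) (insertMap m i b y) (insertMap m i b z)
  have h2 : dist y z = Real.sqrt (∑ j : Fin m, dist (y j) (z j) ^ 2) :=
    EuclideanSpace.dist_eq _ _
  rw [h1, h2]
  congr 1
  rw [Fin.sum_univ_succAbove _ i]
  simp [insertMap]

lemma face_subset_image (m : ℕ) (i : Fin (m+1)) (b : ℝ) :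
    face m i b ⊆ insertMap m i b '' closedCube m := by
  rintro x ⟨hx, hxi⟩
  subst hxi
  refine ⟨(WithLp.toLp 2 (fun j => x (i.succAbove j)) : EuclideanSpace ℝ (Fin m)), fun j => hx _, ?_⟩
  exact congrArg (WithLp.toLp 2) (Fin.insertNth_self_removeNth i x.ofLp)

lemma hausdorff_face_lt_top (m : ℕ) (i : Fin (m+1)) (b : ℝ) :
    μH[(m:ℝ)] (face m i b) < ⊤ := by
  have hfin : μH[(m:ℝ)] (closedCube m : Set (EuclideanSpace ℝ (Fin m))) < ⊤ := by
    have h1 : ((m:ℝ)) = ((Module.finrank ℝ (EuclideanSpace ℝ (Fin m)) : ℕ) : ℝ) := by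
      rw [finrank_euclideanSpace_fin]
    rw [h1]
    exact (isCompact_closedCube m).measure_lt_top
  refine lt_of_le_of_lt (le_trans (measure_mono (face_subset_image m i b))
    ((insertMap_isometry m i b).lipschitz.hausdorffMeasure_image_le (by positivity)
      (closedCube m))) ?_
  simpa using hfin

lemma hausdorff_frontier_lt_top (d : ℕ) (hd : 1 ≤ d) :
    μH[(d:ℝ) - 1] (frontier (openCube d)) < ⊤ := by
  obtain ⟨m, rfl⟩ : ∃ m, d = m + 1 := ⟨d - 1, by omega⟩
  have hcast : ((m+1 : ℕ):ℝ) - 1 = (m:ℝ) := by push_cast; ring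
  rw [hcast]
  have hsub : frontier (openCube (m+1)) ⊆
      ⋃ i : Fin (m+1), (face m i 0 ∪ face m i 1) := by
    intro x hx
    obtain ⟨hxc, hxo⟩ := frontier_subset (m+1) hx
    simp only [openCube, Set.mem_setOf_eq, not_forall] at hxo
    obtain ⟨i, hi⟩ := hxo
    have := hxc i
    simp only [Set.mem_Ioo, not_and_or, not_lt] at hi
    refine Set.mem_iUnion.2 ⟨i, ?_⟩
    rcases hi with h | h
    · exact Or.inl ⟨hxc, le_antisymm h this.1⟩
    · exact Or.inr ⟨hxc, le_antisymm this.2 h⟩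
  calc μH[(m:ℝ)] (frontier (openCube (m+1))) ≤ _ := measure_mono hsub
    _ ≤ ∑ i : Fin (m+1), μH[(m:ℝ)]
        (face m i 0 ∪ face m i 1) :=
        measure_iUnion_fintype_le _ _
    _ < ⊤ := by
        apply ENNReal.sum_lt_top.2
        intro i _
        exact lt_of_le_of_lt (measure_union_le _ _)
          (ENNReal.add_lt_top.2 ⟨hausdorff_face_lt_top m i 0, hausdorff_face_lt_top m i 1⟩)

lemma gradient_eq_comp (u : EuclideanSpace ℝ (Fin d) → ℝ) :
    gradient u = fun x => (InnerProductSpace.toDual ℝ _).symm (fderiv ℝ u x) := rfl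

lemma IsNice.props {d : ℕ} {u : EuclideanSpace ℝ (Fin d) → ℝ} (hu : IsNice d u) :
    ContinuousOn u (closedCube d) ∧ ContinuousOn (gradient u) (closedCube d) ∧
      (∃ C, ∀ x ∈ closedCube d, |u x| ≤ C) ∧
      (∃ C, ∀ x ∈ closedCube d, ‖gradient u x‖ ≤ C) := by
  obtain ⟨U, hUo, hUs, hC1, ⟨Cu, hCu⟩, ⟨Cg, hCg⟩⟩ := hu
  refine ⟨hC1.continuousOn.mono hUs, ?_, ⟨Cu, fun x hx => hCu x (hUs hx)⟩,
    ⟨Cg, fun x hx => hCg x (hUs hx)⟩⟩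
  have h := hC1.continuousOn_fderiv_of_isOpen hUo le_rfl
  rw [gradient_eq_comp]
  exact ((LinearIsometryEquiv.continuous _).comp_continuousOn h).mono hUs

lemma IsNice.differentiableAt {d : ℕ} {u : EuclideanSpace ℝ (Fin d) → ℝ} (hu : IsNice d u)
    {x : EuclideanSpace ℝ (Fin d)} (hx : x ∈ closedCube d) : DifferentiableAt ℝ u x := by
  obtain ⟨U, hUo, hUs, hC1, _, _⟩ := hu
  exact (hC1.contDiffAt (hUo.mem_nhds (hUs hx))).differentiableAt one_ne_zero

lemma IsNice.gradient_sub {d : ℕ} {u v : EuclideanSpace ℝ (Fin d) → ℝ}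
    (hu : IsNice d u) (hv : IsNice d v) {x : EuclideanSpace ℝ (Fin d)} (hx : x ∈ closedCube d) :
    gradient (u - v) x = gradient u x - gradient v x := by
  have h1 := hu.differentiableAt hx
  have h2 := hv.differentiableAt hx
  have h3 : fderiv ℝ (u - v) x = fderiv ℝ u x - fderiv ℝ v x := fderiv_sub h1 h2
  rw [gradient_eq_comp, gradient_eq_comp, gradient_eq_comp]
  simp only [h3, map_sub]

lemma IsNice.sub {d : ℕ} {u v : EuclideanSpace ℝ (Fin d) → ℝ}
    (hu : IsNice d u) (hv : IsNice d v) : IsNice d (u - v) := by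
  obtain ⟨U, hUo, hUs, hC1, ⟨Cu, hCu⟩, ⟨Cg, hCg⟩⟩ := hu
  obtain ⟨V, hVo, hVs, hC1', ⟨Cv, hCv⟩, ⟨Cg', hCg'⟩⟩ := hv
  refine ⟨U ∩ V, hUo.inter hVo, Set.subset_inter hUs hVs,
    (hC1.mono Set.inter_subset_left).sub (hC1'.mono Set.inter_subset_right),
    ⟨Cu + Cv, fun x hx => ?_⟩, ⟨Cg + Cg', fun x hx => ?_⟩⟩
  · calc |(u - v) x| = |u x - v x| := rfl
      _ ≤ |u x| + |v x| := abs_sub _ _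
      _ ≤ Cu + Cv := add_le_add (hCu x hx.1) (hCv x hx.2)
  · have h1 : DifferentiableAt ℝ u x := (hC1.contDiffAt (hUo.mem_nhds hx.1)).differentiableAt one_ne_zero
    have h2 : DifferentiableAt ℝ v x := (hC1'.contDiffAt (hVo.mem_nhds hx.2)).differentiableAt one_ne_zero
    have : gradient (u - v) x = gradient u x - gradient v x := by
      have h3 : fderiv ℝ (u - v) x = fderiv ℝ u x - fderiv ℝ v x := fderiv_sub h1 h2
      rw [gradient_eq_comp, gradient_eq_comp, gradient_eq_comp]
      simp only [h3, map_sub]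
    rw [this]
    exact (norm_sub_le _ _).trans (add_le_add (hCg x hx.1) (hCg' x hx.2))

lemma integrableOn_openCube {d : ℕ} {h : EuclideanSpace ℝ (Fin d) → ℝ}
    (hm : AEStronglyMeasurable h (volume.restrict (openCube d))) (C : ℝ)
    (hb : ∀ x ∈ openCube d, |h x| ≤ C) : IntegrableOn h (openCube d) volume := by
  haveI : IsFiniteMeasure (volume.restrict (openCube d)) :=
    ⟨by rw [Measure.restrict_apply_univ]; exact volume_openCube_lt_top d⟩
  refine ⟨hm, HasFiniteIntegral.of_bounded (C := C) ?_⟩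
  exact (ae_restrict_iff' (isOpen_openCube d).measurableSet).2
    (Filter.Eventually.of_forall fun x hx => by simpa [Real.norm_eq_abs] using hb x hx)

lemma integrableOn_frontier {d : ℕ} (hd : 1 ≤ d) {h : EuclideanSpace ℝ (Fin d) → ℝ}
    (hm : AEStronglyMeasurable h ((μH[(d:ℝ)-1]).restrict (frontier (openCube d)))) (C : ℝ)
    (hb : ∀ x ∈ frontier (openCube d), |h x| ≤ C) :
    IntegrableOn h (frontier (openCube d)) μH[(d:ℝ)-1] := by
  haveI : IsFiniteMeasure ((μH[(d:ℝ)-1]).restrict (frontier (openCube d))) :=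
    ⟨by rw [Measure.restrict_apply_univ]; exact hausdorff_frontier_lt_top d hd⟩
  refine ⟨hm, HasFiniteIntegral.of_bounded (C := C) ?_⟩
  exact (ae_restrict_iff' (isClosed_frontier).measurableSet).2
    (Filter.Eventually.of_forall fun x hx => by simpa [Real.norm_eq_abs] using hb x hx)

lemma aesm_openCube {d : ℕ} {h : EuclideanSpace ℝ (Fin d) → ℝ}
    (hc : ContinuousOn h (closedCube d)) :
    AEStronglyMeasurable h (volume.restrict (openCube d)) :=
  (hc.mono (openCube_subset_closedCube d)).aestronglyMeasurable
    (isOpen_openCube d).measurableSet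

lemma frontier_subset_closedCube (d : ℕ) : frontier (openCube d) ⊆ closedCube d :=
  fun x hx => (frontier_subset d hx).1

lemma aesm_frontier {d : ℕ} {h : EuclideanSpace ℝ (Fin d) → ℝ}
    (hc : ContinuousOn h (closedCube d)) :
    AEStronglyMeasurable h ((μH[(d:ℝ)-1]).restrict (frontier (openCube d))) :=
  (hc.mono (frontier_subset_closedCube d)).aestronglyMeasurable
    (isClosed_frontier).measurableSet

lemma bnd_mul {a b A B : ℝ} (ha : |a| ≤ A) (hb : |b| ≤ B) : |a*b| ≤ A*B := by
  rw [abs_mul]; exact mul_le_mul ha hb (abs_nonneg b) ((abs_nonneg a).trans ha)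

lemma bnd_sq {b B : ℝ} (hb : |b| ≤ B) : |b^2| ≤ B^2 := by
  rw [abs_pow]
  exact pow_le_pow_left₀ (abs_nonneg b) hb 2

lemma energy_diff {d : ℕ} (hd : 1 ≤ d) {w f g : EuclideanSpace ℝ (Fin d) → ℝ}
    (hw : Measurable w) (hwb : ∃ C, ∀ x ∈ openCube d, |w x| ≤ C)
    (hf : Measurable f) (hfb : ∃ C, ∀ x ∈ openCube d, |f x| ≤ C)
    (hg : Measurable g) (hgb : ∃ C, ∀ y ∈ frontier (openCube d), |g y| ≤ C)
    {ustar u : EuclideanSpace ℝ (Fin d) → ℝ}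
    (hstar : IsNice d ustar) (hweak : IsWeakSol d w f g ustar) (hu : IsNice d u) :
    ritzEnergy d w f g u - ritzEnergy d w f g ustar =
      (1/2) * (∫ x in openCube d, ‖gradient (u - ustar) x‖^2) +
      (1/2) * (∫ x in openCube d, w x * ((u - ustar) x)^2) := by
  have hoc := openCube_subset_closedCube d
  have hfc := frontier_subset_closedCube d
  have hmeasΩ := (isOpen_openCube d).measurableSet
  obtain ⟨hcU, hgU, ⟨Cu, hCu⟩, ⟨CU, hCU⟩⟩ := hu.props
  obtain ⟨hcS, hgS, ⟨Cs, hCs⟩, ⟨CS, hCS⟩⟩ := hstar.props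
  have hvnice := hu.sub hstar
  obtain ⟨hcV, hgV, ⟨Cv, hCv⟩, ⟨CV, hCV⟩⟩ := hvnice.props
  obtain ⟨Cw, hCw⟩ := hwb
  obtain ⟨Cf, hCf⟩ := hfb
  obtain ⟨Cg', hCg'⟩ := hgb
  -- integrability on the open cube
  have IAu : IntegrableOn (fun x => ‖gradient u x‖^2) (openCube d) volume :=
    integrableOn_openCube (aesm_openCube (hgU.norm.pow 2)) (CU^2) (fun x hx => by
      have h := hCU x (hoc hx)
      rw [abs_of_nonneg (by positivity)]
      nlinarith [norm_nonneg (gradient u x)])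
  have IAs : IntegrableOn (fun x => ‖gradient ustar x‖^2) (openCube d) volume :=
    integrableOn_openCube (aesm_openCube (hgS.norm.pow 2)) (CS^2) (fun x hx => by
      have h := hCS x (hoc hx)
      rw [abs_of_nonneg (by positivity)]
      nlinarith [norm_nonneg (gradient ustar x)])
  have IAv : IntegrableOn (fun x => ‖gradient (u - ustar) x‖^2) (openCube d) volume :=
    integrableOn_openCube (aesm_openCube (hgV.norm.pow 2)) (CV^2) (fun x hx => by
      have h := hCV x (hoc hx)
      rw [abs_of_nonneg (by positivity)]
      nlinarith [norm_nonneg (gradient (u - ustar) x)])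
  have Iinner : IntegrableOn
      (fun x => (inner ℝ (gradient ustar x) (gradient (u - ustar) x) : ℝ)) (openCube d) volume :=
    integrableOn_openCube (aesm_openCube (hgS.inner hgV)) (CS * CV) (fun x hx => by
      refine (abs_real_inner_le_norm _ _).trans ?_
      exact mul_le_mul (hCS x (hoc hx)) (hCV x (hoc hx)) (norm_nonneg _)
        ((norm_nonneg _).trans (hCS x (hoc hx))))
  have hwa : AEStronglyMeasurable w (volume.restrict (openCube d)) :=
    hw.aestronglyMeasurable
  have IBu : IntegrableOn (fun x => w x * (u x)^2) (openCube d) volume :=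
    integrableOn_openCube (hwa.mul (aesm_openCube (hcU.pow 2))) (Cw * Cu^2)
      (fun x hx => bnd_mul (hCw x hx) (bnd_sq (hCu x (hoc hx))))
  have IBs : IntegrableOn (fun x => w x * (ustar x)^2) (openCube d) volume :=
    integrableOn_openCube (hwa.mul (aesm_openCube (hcS.pow 2))) (Cw * Cs^2)
      (fun x hx => bnd_mul (hCw x hx) (bnd_sq (hCs x (hoc hx))))
  have IBv : IntegrableOn (fun x => w x * ((u - ustar) x)^2) (openCube d) volume :=
    integrableOn_openCube (hwa.mul (aesm_openCube (hcV.pow 2))) (Cw * Cv^2)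
      (fun x hx => bnd_mul (hCw x hx) (bnd_sq (hCv x (hoc hx))))
  have IBsv : IntegrableOn (fun x => w x * ustar x * (u - ustar) x) (openCube d) volume :=
    integrableOn_openCube ((hwa.mul (aesm_openCube hcS)).mul (aesm_openCube hcV))
      (Cw * Cs * Cv)
      (fun x hx => bnd_mul (bnd_mul (hCw x hx) (hCs x (hoc hx))) (hCv x (hoc hx)))
  have hfa : AEStronglyMeasurable f (volume.restrict (openCube d)) :=
    hf.aestronglyMeasurable
  have IFu : IntegrableOn (fun x => f x * u x) (openCube d) volume :=
    integrableOn_openCube (hfa.mul (aesm_openCube hcU)) (Cf * Cu)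
      (fun x hx => bnd_mul (hCf x hx) (hCu x (hoc hx)))
  have IFs : IntegrableOn (fun x => f x * ustar x) (openCube d) volume :=
    integrableOn_openCube (hfa.mul (aesm_openCube hcS)) (Cf * Cs)
      (fun x hx => bnd_mul (hCf x hx) (hCs x (hoc hx)))
  have hga : AEStronglyMeasurable g ((μH[(d:ℝ)-1]).restrict (frontier (openCube d))) :=
    hg.aestronglyMeasurable
  have IGu : IntegrableOn (fun y => g y * u y) (frontier (openCube d)) μH[(d:ℝ)-1] :=
    integrableOn_frontier hd (hga.mul (aesm_frontier hcU)) (Cg' * Cu)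
      (fun y hy => bnd_mul (hCg' y hy) (hCu y (hfc hy)))
  have IGs : IntegrableOn (fun y => g y * ustar y) (frontier (openCube d)) μH[(d:ℝ)-1] :=
    integrableOn_frontier hd (hga.mul (aesm_frontier hcS)) (Cg' * Cs)
      (fun y hy => bnd_mul (hCg' y hy) (hCs y (hfc hy)))
  -- pointwise gradient identity
  have hvgrad : ∀ x ∈ openCube d, gradient (u - ustar) x = gradient u x - gradient ustar x :=
    fun x hx => hu.gradient_sub hstar (hoc hx)
  -- E1
  have E1 : (∫ x in openCube d, ‖gradient (u - ustar) x‖^2) =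
      (∫ x in openCube d, ‖gradient u x‖^2)
        - 2 * (∫ x in openCube d, (inner ℝ (gradient ustar x) (gradient (u - ustar) x) : ℝ))
        - (∫ x in openCube d, ‖gradient ustar x‖^2) := by
    have hpt : Set.EqOn (fun x => ‖gradient (u - ustar) x‖^2)
        (fun x => ‖gradient u x‖^2
          - 2 * (inner ℝ (gradient ustar x) (gradient (u - ustar) x) : ℝ)
          - ‖gradient ustar x‖^2) (openCube d) := by
      intro x hx
      simp only
      rw [hvgrad x hx, norm_sub_sq_real, inner_sub_right, real_inner_comm,
        real_inner_self_eq_norm_sq]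
      ring
    have h2i : IntegrableOn
        (fun x => 2 * (inner ℝ (gradient ustar x) (gradient (u - ustar) x) : ℝ))
        (openCube d) volume := Iinner.const_mul 2
    have h12 : IntegrableOn
        (fun x => ‖gradient u x‖^2
          - 2 * (inner ℝ (gradient ustar x) (gradient (u - ustar) x) : ℝ))
        (openCube d) volume := IAu.sub h2i
    rw [setIntegral_congr_fun hmeasΩ hpt, integral_sub h12 IAs, integral_sub IAu h2i,
      integral_const_mul]
  -- E2
  have E2 : (∫ x in openCube d, w x * ((u - ustar) x)^2) =
      (∫ x in openCube d, w x * (u x)^2)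
        - 2 * (∫ x in openCube d, w x * ustar x * (u - ustar) x)
        - (∫ x in openCube d, w x * (ustar x)^2) := by
    have hpt : Set.EqOn (fun x => w x * ((u - ustar) x)^2)
        (fun x => w x * (u x)^2 - 2 * (w x * ustar x * (u - ustar) x)
          - w x * (ustar x)^2) (openCube d) := by
      intro x _
      simp only [Pi.sub_apply]
      ring
    have h2i : IntegrableOn (fun x => 2 * (w x * ustar x * (u - ustar) x))
        (openCube d) volume := IBsv.const_mul 2
    have h12 : IntegrableOn
        (fun x => w x * (u x)^2 - 2 * (w x * ustar x * (u - ustar) x))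
        (openCube d) volume := IBu.sub h2i
    rw [setIntegral_congr_fun hmeasΩ hpt, integral_sub h12 IBs, integral_sub IBu h2i,
      integral_const_mul]
  -- E3
  have E3 : (∫ x in openCube d, f x * (u - ustar) x) =
      (∫ x in openCube d, f x * u x) - ∫ x in openCube d, f x * ustar x := by
    have hpt : (fun x => f x * (u - ustar) x)
        = fun x => f x * u x - f x * ustar x := by
      funext x; simp only [Pi.sub_apply]; ring
    rw [hpt, integral_sub IFu IFs]
  -- E4
  have E4 : (∫ y in frontier (openCube d), g y * (u - ustar) y ∂(μH[(d:ℝ) - 1])) =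
      (∫ y in frontier (openCube d), g y * u y ∂(μH[(d:ℝ) - 1]))
        - ∫ y in frontier (openCube d), g y * ustar y ∂(μH[(d:ℝ) - 1]) := by
    have hpt : (fun y => g y * (u - ustar) y)
        = fun y => g y * u y - g y * ustar y := by
      funext y; simp only [Pi.sub_apply]; ring
    rw [hpt, integral_sub IGu IGs]
  have W := hweak (u - ustar) hvnice
  simp only [ritzEnergy]
  linarith [E1, E2, E3, E4, W]

lemma coercive_lower {d : ℕ} {w : EuclideanSpace ℝ (Fin d) → ℝ} {c₁ : ℝ} (hc₁ : 0 < c₁)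
    (hw : Measurable w) (hwb : ∃ C, ∀ x ∈ openCube d, |w x| ≤ C)
    (hwlb : ∀ᵐ x ∂(volume.restrict (openCube d)), c₁ ≤ w x)
    {v : EuclideanSpace ℝ (Fin d) → ℝ} (hv : IsNice d v) :
    min c₁ 1 / 2 * H1normSq d v ≤
      (1/2) * (∫ x in openCube d, ‖gradient v x‖^2) +
      (1/2) * (∫ x in openCube d, w x * (v x)^2) := by
  have hoc := openCube_subset_closedCube d
  have hmeasΩ := (isOpen_openCube d).measurableSet
  obtain ⟨hcV, hgV, ⟨Cv, hCv⟩, ⟨CV, hCV⟩⟩ := hv.props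
  obtain ⟨Cw, hCw⟩ := hwb
  have Isq : IntegrableOn (fun x => (v x)^2) (openCube d) volume :=
    integrableOn_openCube (aesm_openCube (hcV.pow 2)) (Cv^2)
      (fun x hx => bnd_sq (hCv x (hoc hx)))
  have IB : IntegrableOn (fun x => w x * (v x)^2) (openCube d) volume :=
    integrableOn_openCube (hw.aestronglyMeasurable.mul (aesm_openCube (hcV.pow 2))) (Cw * Cv^2)
      (fun x hx => bnd_mul (hCw x hx) (bnd_sq (hCv x (hoc hx))))
  have h1 : min c₁ 1 * (∫ x in openCube d, (v x)^2) ≤ ∫ x in openCube d, w x * (v x)^2 := by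
    rw [← integral_const_mul]
    refine integral_mono_ae (Isq.const_mul _) IB ?_
    filter_upwards [hwlb] with x hx
    have h0 : (0:ℝ) ≤ (v x)^2 := sq_nonneg _
    have : min c₁ 1 ≤ w x := le_trans (min_le_left _ _) hx
    exact mul_le_mul_of_nonneg_right this h0
  have hg0 : 0 ≤ ∫ x in openCube d, ‖gradient v x‖^2 :=
    setIntegral_nonneg hmeasΩ (fun x _ => by positivity)
  have h2 : min c₁ 1 * (∫ x in openCube d, ‖gradient v x‖^2)
      ≤ ∫ x in openCube d, ‖gradient v x‖^2 := by
    have : min c₁ 1 ≤ 1 := min_le_right _ _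
    nlinarith
  rw [H1normSq]
  linarith

lemma coercive_upper {d : ℕ} {w : EuclideanSpace ℝ (Fin d) → ℝ}
    (hw : Measurable w) (hwb : ∃ C, ∀ x ∈ openCube d, |w x| ≤ C)
    {v : EuclideanSpace ℝ (Fin d) → ℝ} (hv : IsNice d v) :
    (1/2) * (∫ x in openCube d, ‖gradient v x‖^2) +
      (1/2) * (∫ x in openCube d, w x * (v x)^2) ≤
    max ((eLpNorm w ⊤ (volume.restrict (openCube d))).toReal) 1 / 2 * H1normSq d v := by
  have hoc := openCube_subset_closedCube d
  have hmeasΩ := (isOpen_openCube d).measurableSet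
  obtain ⟨hcV, hgV, ⟨Cv, hCv⟩, ⟨CV, hCV⟩⟩ := hv.props
  obtain ⟨Cw, hCw⟩ := hwb
  set W := (eLpNorm w ⊤ (volume.restrict (openCube d))).toReal with hW
  have hwae : ∀ᵐ x ∂(volume.restrict (openCube d)), ‖w x‖ ≤ Cw :=
    (ae_restrict_iff' hmeasΩ).2 (Filter.Eventually.of_forall fun x hx => by
      simpa [Real.norm_eq_abs] using hCw x hx)
  have hfin : eLpNormEssSup w (volume.restrict (openCube d)) < ⊤ :=
    eLpNormEssSup_lt_top_of_ae_bound hwae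
  have hWle : ∀ᵐ x ∂(volume.restrict (openCube d)), |w x| ≤ W := by
    filter_upwards [ae_le_eLpNormEssSup (f := w) (μ := volume.restrict (openCube d))] with x hx
    have h1 : ((‖w x‖₊ : ℝ≥0∞)).toReal ≤ (eLpNormEssSup w (volume.restrict (openCube d))).toReal :=
      ENNReal.toReal_mono hfin.ne hx
    simpa [hW, eLpNorm_exponent_top, Real.norm_eq_abs] using h1
  have Isq : IntegrableOn (fun x => (v x)^2) (openCube d) volume :=
    integrableOn_openCube (aesm_openCube (hcV.pow 2)) (Cv^2)
      (fun x hx => bnd_sq (hCv x (hoc hx)))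
  have IB : IntegrableOn (fun x => w x * (v x)^2) (openCube d) volume :=
    integrableOn_openCube (hw.aestronglyMeasurable.mul (aesm_openCube (hcV.pow 2))) (Cw * Cv^2)
      (fun x hx => bnd_mul (hCw x hx) (bnd_sq (hCv x (hoc hx))))
  have h1 : (∫ x in openCube d, w x * (v x)^2) ≤ max W 1 * ∫ x in openCube d, (v x)^2 := by
    rw [← integral_const_mul]
    refine integral_mono_ae IB (Isq.const_mul _) ?_
    filter_upwards [hWle] with x hx
    have h0 : (0:ℝ) ≤ (v x)^2 := sq_nonneg _
    have hwx : w x ≤ max W 1 := le_trans (le_trans (le_abs_self _) hx) (le_max_left _ _)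
    exact mul_le_mul_of_nonneg_right hwx h0
  have hg0 : 0 ≤ ∫ x in openCube d, ‖gradient v x‖^2 :=
    setIntegral_nonneg hmeasΩ (fun x _ => by positivity)
  have h2 : (∫ x in openCube d, ‖gradient v x‖^2)
      ≤ max W 1 * ∫ x in openCube d, ‖gradient v x‖^2 := by
    nlinarith [le_max_right W 1]
  rw [H1normSq]
  linarith

/-- **Error decomposition of the deep Ritz method (Lemma 3.1).**
`‖u_A − u*‖²_{H¹} ≤ (2/min(c₁,1))·[(max(‖w‖_∞,1)/2)·inf_{ū∈N}‖ū−u*‖²_{H¹} + 2S + (L̂(u_A) − L̂(û))]`. -/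
theorem deepRitz_error_decomposition (d : ℕ) (hd : 1 < d)
    (w f g : EuclideanSpace ℝ (Fin d) → ℝ) (c₁ : ℝ) (hc₁ : 0 < c₁)
    (hw : Measurable w) (hwb : ∃ C, ∀ x ∈ openCube d, |w x| ≤ C)
    (hwlb : ∀ᵐ x ∂(volume.restrict (openCube d)), c₁ ≤ w x)
    (hf : Measurable f) (hfb : ∃ C, ∀ x ∈ openCube d, |f x| ≤ C)
    (hg : Measurable g) (hgb : ∃ C, ∀ y ∈ frontier (openCube d), |g y| ≤ C)
    (ustar : EuclideanSpace ℝ (Fin d) → ℝ)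
    (hnice : IsNice d ustar) (hweak : IsWeakSol d w f g ustar)
    (N : Set (EuclideanSpace ℝ (Fin d) → ℝ)) (hN : N.Nonempty)
    (hNnice : ∀ u ∈ N, IsNice d u)
    (Lhat : (EuclideanSpace ℝ (Fin d) → ℝ) → ℝ)
    (hbdd : BddAbove ((fun u => |ritzEnergy d w f g u - Lhat u|) '' N))
    (S : ℝ) (hS : S = sSup ((fun u => |ritzEnergy d w f g u - Lhat u|) '' N))
    (uhat : EuclideanSpace ℝ (Fin d) → ℝ) (huhat : uhat ∈ N)
    (hmin : ∀ u ∈ N, Lhat uhat ≤ Lhat u)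
    (uA : EuclideanSpace ℝ (Fin d) → ℝ) (huA : uA ∈ N) :
    H1normSq d (uA - ustar) ≤
      2 / min c₁ 1 *
        (max ((eLpNorm w ⊤ (volume.restrict (openCube d))).toReal) 1 / 2 *
            sInf ((fun ubar => H1normSq d (ubar - ustar)) '' N)
          + 2 * S + (Lhat uA - Lhat uhat)) := by
  have hd1 : 1 ≤ d := hd.le
  set W := (eLpNorm w ⊤ (volume.restrict (openCube d))).toReal with hWdef
  set X := H1normSq d (uA - ustar) with hXdef
  have hminpos : 0 < min c₁ 1 := lt_min hc₁ one_pos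
  have hmh : (0:ℝ) < max W 1 / 2 := by
    have : (1:ℝ) ≤ max W 1 := le_max_right _ _
    linarith
  -- bound |L u - Lhat u| ≤ S on N
  have hSle : ∀ u ∈ N, |ritzEnergy d w f g u - Lhat u| ≤ S := fun u hu => by
    rw [hS]; exact le_csSup hbdd ⟨u, hu, rfl⟩
  -- lower bound at uA
  have hlow : min c₁ 1 / 2 * X ≤ ritzEnergy d w f g uA - ritzEnergy d w f g ustar := by
    rw [energy_diff hd1 hw hwb hf hfb hg hgb hnice hweak (hNnice uA huA)]
    exact coercive_lower hc₁ hw hwb hwlb ((hNnice uA huA).sub hnice)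
  -- upper bound for every ubar ∈ N
  have hup : ∀ ub ∈ N, ritzEnergy d w f g ub - ritzEnergy d w f g ustar ≤
      max W 1 / 2 * H1normSq d (ub - ustar) := by
    intro ub hub
    rw [energy_diff hd1 hw hwb hf hfb hg hgb hnice hweak (hNnice ub hub)]
    have h := coercive_upper hw hwb ((hNnice ub hub).sub hnice)
    convert h using 2
  -- the key estimate against each element of N
  have hkey : ∀ b ∈ (fun ubar => H1normSq d (ubar - ustar)) '' N,
      (min c₁ 1 / 2 * X - 2 * S - (Lhat uA - Lhat uhat)) / (max W 1 / 2) ≤ b := by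
    rintro b ⟨ub, hub, rfl⟩
    rw [div_le_iff₀ hmh]
    have h1 := hSle uA huA
    have h2 := hSle ub hub
    have h3 := hmin ub hub
    have h4 := hup ub hub
    have habs1 : ritzEnergy d w f g uA - Lhat uA ≤ S := (abs_le.1 h1).2
    have habs2 : Lhat ub - ritzEnergy d w f g ub ≤ S := by
      have := (abs_le.1 h2).1; linarith
    -- chain
    have hchain : min c₁ 1 / 2 * X ≤ 2 * S + (Lhat uA - Lhat uhat)
        + max W 1 / 2 * H1normSq d (ub - ustar) := by linarith
    linarith
  have hInf : (min c₁ 1 / 2 * X - 2 * S - (Lhat uA - Lhat uhat)) / (max W 1 / 2) ≤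
      sInf ((fun ubar => H1normSq d (ubar - ustar)) '' N) :=
    le_csInf (hN.image _) hkey
  have hInf' : min c₁ 1 / 2 * X - 2 * S - (Lhat uA - Lhat uhat) ≤
      max W 1 / 2 * sInf ((fun ubar => H1normSq d (ubar - ustar)) '' N) := by
    have := (div_le_iff₀ hmh).1 hInf
    linarith
  have hfinal : min c₁ 1 / 2 * X ≤
      max W 1 / 2 * sInf ((fun ubar => H1normSq d (ubar - ustar)) '' N)
        + 2 * S + (Lhat uA - Lhat uhat) := by linarith
  have heq : 2 / min c₁ 1 * (min c₁ 1 / 2 * X) = X := by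
    field_simp
  calc X = 2 / min c₁ 1 * (min c₁ 1 / 2 * X) := heq.symm
    _ ≤ 2 / min c₁ 1 *
        (max W 1 / 2 * sInf ((fun ubar => H1normSq d (ubar - ustar)) '' N)
          + 2 * S + (Lhat uA - Lhat uhat)) := by
        apply mul_le_mul_of_nonneg_left hfinal
        positivity
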